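/- Let F^n be code-functions independent of channel feedback (no feedback from Y to F, i.e., p(f_i|f^{i-1}, y^{i-1}) = p(f_i|f^{i-1})), let X_i = F_i(Z^{i-1}) be determined by (F^i, Z^{i-1}), and suppose the Markov chain F^i − (X^i, Y^{i-1}) − Y_i holds. Then the mutual information density satisfies i(F^n; Y^n) = i(X^n → Y^n) − i(X^n → Y^n ‖ F^n), pointwise on the support of the joint distribution, where i(X^n → Y^n) = log(→p(Y^n|X^n)/p(Y^n)) and i(X^n → Y^n ‖ F^n) = log(→p(Y^n|X^n,F^n)/→p(Y^n|F^n)). -/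

import Mathlib

open Finset

namespace NFB

variable {Ω : Type*} [Fintype Ω]

/-- Probability that the finite random variable `X` (on finite sample space `Ω`
with weights `μ`) takes the value `a`. -/
noncomputable def pr (μ : Ω → ℝ) {α : Type*} [Fintype α] [DecidableEq α]
    (X : Ω → α) (a : α) : ℝ :=
  ∑ ω ∈ Finset.univ.filter (fun ω => X ω = a), μ ω

/-- Conditional probability `p(X = a | Y = b)`. -/
noncomputable def condpr (μ : Ω → ℝ) {α β : Type*} [Fintype α] [DecidableEq α]
    [Fintype β] [DecidableEq β] (X : Ω → α) (Y : Ω → β) (a : α) (b : β) : ℝ :=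
  pr μ (fun ω => (X ω, Y ω)) (a, b) / pr μ Y b

/-- Shannon entropy (base 2) of a finite random variable. -/
noncomputable def ent (μ : Ω → ℝ) {α : Type*} [Fintype α] [DecidableEq α]
    (X : Ω → α) : ℝ :=
  ∑ a : α, -(pr μ X a * Real.logb 2 (pr μ X a))

/-- Shannon entropy (base 2) of a distribution given directly as a weight function. -/
noncomputable def entD {γ : Type*} [Fintype γ] (p : γ → ℝ) : ℝ :=
  ∑ c : γ, -(p c * Real.logb 2 (p c))

/-- Binary entropy function (base 2). -/
noncomputable def binent (a : ℝ) : ℝ :=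
  -(a * Real.logb 2 a) - ((1 - a) * Real.logb 2 (1 - a))

/-- Conditional entropy `H(X | Y)`. -/
noncomputable def condent (μ : Ω → ℝ) {α β : Type*} [Fintype α] [DecidableEq α]
    [Fintype β] [DecidableEq β] (X : Ω → α) (Y : Ω → β) : ℝ :=
  ent μ (fun ω => (X ω, Y ω)) - ent μ Y

/-- Mutual information `I(X; Y)`. -/
noncomputable def mi (μ : Ω → ℝ) {α β : Type*} [Fintype α] [DecidableEq α]
    [Fintype β] [DecidableEq β] (X : Ω → α) (Y : Ω → β) : ℝ :=
  ent μ X + ent μ Y - ent μ (fun ω => (X ω, Y ω))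

/-- Conditional mutual information `I(X; Y | Z)`. -/
noncomputable def cmi (μ : Ω → ℝ) {α β γ : Type*} [Fintype α] [DecidableEq α]
    [Fintype β] [DecidableEq β] [Fintype γ] [DecidableEq γ]
    (X : Ω → α) (Y : Ω → β) (Z : Ω → γ) : ℝ :=
  condent μ X Z + condent μ Y Z - condent μ (fun ω => (X ω, Y ω)) Z

/-- The length-`i` prefix of a sequence `x : Fin n → α`. -/
def pfx {α : Type*} {n : ℕ} (x : Fin n → α) (i : ℕ) (h : i ≤ n) : Fin i → α :=
  fun j => x (Fin.castLE h j)

/-- Directed information `I(Xⁿ → Yⁿ) = ∑ᵢ I(Xⁱ; Yᵢ | Yⁱ⁻¹)`. -/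
noncomputable def dirinfo (μ : Ω → ℝ) {α β : Type*} [Fintype α] [DecidableEq α]
    [Fintype β] [DecidableEq β] {n : ℕ} (X : Ω → Fin n → α) (Y : Ω → Fin n → β) : ℝ :=
  ∑ i : Fin n, cmi μ (fun ω => pfx (X ω) (i.1 + 1) i.isLt)
    (fun ω => Y ω i) (fun ω => pfx (Y ω) i.1 i.isLt.le)

/-- Conditional directed information `I(Xⁿ → Yⁿ | W) = ∑ᵢ I(Xⁱ; Yᵢ | Yⁱ⁻¹, W)`. -/
noncomputable def dirinfoCond (μ : Ω → ℝ) {α β γ : Type*} [Fintype α] [DecidableEq α]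
    [Fintype β] [DecidableEq β] [Fintype γ] [DecidableEq γ]
    {n : ℕ} (X : Ω → Fin n → α) (Y : Ω → Fin n → β) (W : Ω → γ) : ℝ :=
  ∑ i : Fin n, cmi μ (fun ω => pfx (X ω) (i.1 + 1) i.isLt)
    (fun ω => Y ω i) (fun ω => (pfx (Y ω) i.1 i.isLt.le, W ω))

/-- Causal conditional directed information
`I(Xⁿ → Yⁿ ‖ Zⁿ) = ∑ᵢ I(Xⁱ; Yᵢ | Yⁱ⁻¹, Zⁱ⁻¹)`. -/
noncomputable def dirinfoCausal (μ : Ω → ℝ) {α β γ : Type*} [Fintype α] [DecidableEq α]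
    [Fintype β] [DecidableEq β] [Fintype γ] [DecidableEq γ]
    {n : ℕ} (X : Ω → Fin n → α) (Y : Ω → Fin n → β) (Z : Ω → Fin n → γ) : ℝ :=
  ∑ i : Fin n, cmi μ (fun ω => pfx (X ω) (i.1 + 1) i.isLt)
    (fun ω => Y ω i) (fun ω => (pfx (Y ω) i.1 i.isLt.le, pfx (Z ω) i.1 i.isLt.le))

/-- Directed information from feedback to outputs
`I(Zⁿ⁻¹ → Yⁿ) = ∑ᵢ I(Zⁱ⁻¹; Yᵢ | Yⁱ⁻¹)`. -/
noncomputable def fbinfo (μ : Ω → ℝ) {ζ β : Type*} [Fintype ζ] [DecidableEq ζ]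
    [Fintype β] [DecidableEq β] {n : ℕ} (Z : Ω → Fin n → ζ) (Y : Ω → Fin n → β) : ℝ :=
  ∑ i : Fin n, cmi μ (fun ω => pfx (Z ω) i.1 i.isLt.le)
    (fun ω => Y ω i) (fun ω => pfx (Y ω) i.1 i.isLt.le)

def trunc {γ : Type*} {n : ℕ} (x : Fin n → γ) (i : ℕ) : Fin n → Option γ :=
  fun j => if j.1 < i then some (x j) else none

lemma pfx_eq_iff_trunc {γ : Type*} {n : ℕ} (u v : Fin n → γ) {i : ℕ} (h : i ≤ n) :
    pfx u i h = pfx v i h ↔ trunc u i = trunc v i := by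
  constructor
  · intro he
    funext j
    by_cases hj : j.1 < i
    · have := congrFun he ⟨j.1, hj⟩
      simp only [pfx] at this
      have hc : Fin.castLE h ⟨j.1, hj⟩ = j := Fin.ext rfl
      rw [hc] at this
      simp [trunc, hj, this]
    · simp [trunc, hj]
  · intro he
    funext j
    have := congrFun he (Fin.castLE h j)
    have hj : (Fin.castLE h j).1 < i := j.isLt
    simp only [trunc, hj, if_pos, Option.some.injEq] at this
    simpa [pfx] using this

lemma trunc_zero_eq {γ : Type*} {n : ℕ} (u v : Fin n → γ) :
    trunc u 0 = trunc v 0 := by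
  funext j; simp [trunc]

lemma trunc_n_eq_iff {γ : Type*} {n : ℕ} (u v : Fin n → γ) :
    trunc u n = trunc v n ↔ u = v := by
  constructor
  · intro he
    funext j
    have := congrFun he j
    simpa [trunc, j.isLt] using this
  · rintro rfl; rfl

lemma trunc_succ_eq_iff {γ : Type*} {n : ℕ} (u v : Fin n → γ) {i : ℕ} (h : i < n) :
    trunc u (i + 1) = trunc v (i + 1) ↔
      (u ⟨i, h⟩ = v ⟨i, h⟩ ∧ trunc u i = trunc v i) := by
  constructor
  · intro he
    refine ⟨?_, ?_⟩
    · have := congrFun he ⟨i, h⟩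
      simpa [trunc] using this
    · funext j
      by_cases hj : j.1 < i
      · have := congrFun he j
        simpa [trunc, hj, Nat.lt_succ_of_lt hj] using this
      · simp [trunc, hj]
  · rintro ⟨h1, h2⟩
    funext j
    by_cases hj : j.1 < i
    · have := congrFun h2 j
      simpa [trunc, hj, Nat.lt_succ_of_lt hj] using this
    · by_cases hj' : j.1 < i + 1
      · have hji : j = ⟨i, h⟩ := Fin.ext (show j.1 = i by omega)
        subst hji
        simp [trunc, hj', h1]
      · simp [trunc, hj']

lemma pr_congr (μ : Ω → ℝ) {α α' : Type*} [Fintype α] [DecidableEq α]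
    [Fintype α'] [DecidableEq α'] {X : Ω → α} {X' : Ω → α'} {a : α} {a' : α'}
    (h : ∀ ω, X ω = a ↔ X' ω = a') : pr μ X a = pr μ X' a' := by
  unfold pr
  refine Finset.sum_congr ?_ (fun _ _ => rfl)
  ext ω
  simp [h ω]

lemma pr_pos (μ : Ω → ℝ) (hμ0 : ∀ ω, 0 ≤ μ ω) {α : Type*} [Fintype α]
    [DecidableEq α] (X : Ω → α) {ω : Ω} (hω : 0 < μ ω) : 0 < pr μ X (X ω) := by
  refine lt_of_lt_of_le hω ?_
  exact Finset.single_le_sum (fun i _ => hμ0 i) (by simp)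

lemma condpr_pos (μ : Ω → ℝ) (hμ0 : ∀ ω, 0 ≤ μ ω) {α β : Type*} [Fintype α]
    [DecidableEq α] [Fintype β] [DecidableEq β] (X : Ω → α) (Y : Ω → β) {ω : Ω}
    (hω : 0 < μ ω) : 0 < condpr μ X Y (X ω) (Y ω) := by
  unfold condpr
  exact div_pos (pr_pos μ hμ0 (fun ω' => (X ω', Y ω')) hω) (pr_pos μ hμ0 Y hω)

lemma condpr_congr (μ : Ω → ℝ) {α α' β β' : Type*} [Fintype α] [DecidableEq α]
    [Fintype α'] [DecidableEq α'] [Fintype β] [DecidableEq β] [Fintype β']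
    [DecidableEq β'] {X : Ω → α} {X' : Ω → α'} {Y : Ω → β} {Y' : Ω → β'}
    {a : α} {a' : α'} {b : β} {b' : β'}
    (hX : ∀ ω, X ω = a ↔ X' ω = a') (hY : ∀ ω, Y ω = b ↔ Y' ω = b') :
    condpr μ X Y a b = condpr μ X' Y' a' b' := by
  unfold condpr
  rw [pr_congr μ (X := fun ω => (X ω, Y ω)) (X' := fun ω => (X' ω, Y' ω))
    (a := (a, b)) (a' := (a', b'))
    (fun ω => by simp [Prod.ext_iff, hX ω, hY ω]), pr_congr μ hY]

lemma tele {n : ℕ} (Q : ℕ → ℝ) (c : Fin n → ℝ) (h0 : Q 0 = 1)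
    (hstep : ∀ i : Fin n, Q (i.1 + 1) = Q i.1 * c i) :
    Q n = ∏ i : Fin n, c i := by
  have key : ∀ k, k ≤ n →
      Q k = ∏ i ∈ Finset.range k, (fun j => if h : j < n then c ⟨j, h⟩ else 1) i := by
    intro k
    induction k with
    | zero => intro _; simpa using h0
    | succ k ih =>
      intro hk
      have hkn : k < n := hk
      rw [Finset.prod_range_succ, ← ih (Nat.le_of_succ_le hk)]
      simp only [dif_pos hkn]
      exact hstep ⟨k, hkn⟩
  rw [key n le_rfl, ← Fin.prod_univ_eq_prod_range]
  exact Finset.prod_congr rfl (fun i _ => by simp [i.isLt])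

/-- pr that a pair of whole sequences equals its value at `ω`, as a product of
pointwise conditional probabilities (chain rule). -/
lemma chain_pair (μ : Ω → ℝ) (hμ0 : ∀ ω, 0 ≤ μ ω) (hμ1 : ∑ ω, μ ω = 1)
    {φ β : Type*} [Fintype φ] [DecidableEq φ] [Fintype β] [DecidableEq β]
    {n : ℕ} (F : Ω → Fin n → φ) (Y : Ω → Fin n → β) (ω : Ω) (hω : 0 < μ ω) :
    pr μ (fun ω' => (F ω', Y ω')) (F ω, Y ω) =
      ∏ i : Fin n,
        (condpr μ (fun ω' => F ω' i)
            (fun ω' => (pfx (F ω') i.1 i.isLt.le, pfx (Y ω') i.1 i.isLt.le))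
            (F ω i) (pfx (F ω) i.1 i.isLt.le, pfx (Y ω) i.1 i.isLt.le) *
          condpr μ (fun ω' => Y ω' i)
            (fun ω' => (pfx (F ω') (i.1 + 1) i.isLt, pfx (Y ω') i.1 i.isLt.le))
            (Y ω i) (pfx (F ω) (i.1 + 1) i.isLt, pfx (Y ω) i.1 i.isLt.le)) := by
  have h0 : pr μ (fun ω' => (trunc (F ω') 0, trunc (Y ω') 0))
      (trunc (F ω) 0, trunc (Y ω) 0) = 1 := by
    unfold pr
    rw [Finset.filter_true_of_mem (fun ω' _ =>
      Prod.ext (trunc_zero_eq (F ω') (F ω)) (trunc_zero_eq (Y ω') (Y ω)))]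
    exact hμ1
  have hstep : ∀ i : Fin n,
      pr μ (fun ω' => (trunc (F ω') (i.1 + 1), trunc (Y ω') (i.1 + 1)))
        (trunc (F ω) (i.1 + 1), trunc (Y ω) (i.1 + 1)) =
      pr μ (fun ω' => (trunc (F ω') i.1, trunc (Y ω') i.1))
        (trunc (F ω) i.1, trunc (Y ω) i.1) *
      (condpr μ (fun ω' => F ω' i)
          (fun ω' => (pfx (F ω') i.1 i.isLt.le, pfx (Y ω') i.1 i.isLt.le))
          (F ω i) (pfx (F ω) i.1 i.isLt.le, pfx (Y ω) i.1 i.isLt.le) *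
        condpr μ (fun ω' => Y ω' i)
          (fun ω' => (pfx (F ω') (i.1 + 1) i.isLt, pfx (Y ω') i.1 i.isLt.le))
          (Y ω i) (pfx (F ω) (i.1 + 1) i.isLt, pfx (Y ω) i.1 i.isLt.le)) := by
    intro i
    have hQ : 0 < pr μ (fun ω' => (trunc (F ω') i.1, trunc (Y ω') i.1))
        (trunc (F ω) i.1, trunc (Y ω) i.1) :=
      pr_pos μ hμ0 (fun ω' => (trunc (F ω') i.1, trunc (Y ω') i.1)) hω
    have hR : 0 < pr μ (fun ω' => (trunc (F ω') (i.1 + 1), trunc (Y ω') i.1))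
        (trunc (F ω) (i.1 + 1), trunc (Y ω) i.1) :=
      pr_pos μ hμ0 (fun ω' => (trunc (F ω') (i.1 + 1), trunc (Y ω') i.1)) hω
    have e1 : condpr μ (fun ω' => F ω' i)
        (fun ω' => (pfx (F ω') i.1 i.isLt.le, pfx (Y ω') i.1 i.isLt.le))
        (F ω i) (pfx (F ω) i.1 i.isLt.le, pfx (Y ω) i.1 i.isLt.le) =
        pr μ (fun ω' => (trunc (F ω') (i.1 + 1), trunc (Y ω') i.1))
          (trunc (F ω) (i.1 + 1), trunc (Y ω) i.1) /
        pr μ (fun ω' => (trunc (F ω') i.1, trunc (Y ω') i.1))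
          (trunc (F ω) i.1, trunc (Y ω) i.1) := by
      unfold condpr
      congr 1
      · refine pr_congr μ (fun ω' => ?_)
        simp only [Prod.mk.injEq, pfx_eq_iff_trunc,
          trunc_succ_eq_iff (F ω') (F ω) i.isLt, Fin.eta]
        tauto
      · refine pr_congr μ (fun ω' => ?_)
        simp only [Prod.mk.injEq, pfx_eq_iff_trunc]
    have e2 : condpr μ (fun ω' => Y ω' i)
        (fun ω' => (pfx (F ω') (i.1 + 1) i.isLt, pfx (Y ω') i.1 i.isLt.le))
        (Y ω i) (pfx (F ω) (i.1 + 1) i.isLt, pfx (Y ω) i.1 i.isLt.le) =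
        pr μ (fun ω' => (trunc (F ω') (i.1 + 1), trunc (Y ω') (i.1 + 1)))
          (trunc (F ω) (i.1 + 1), trunc (Y ω) (i.1 + 1)) /
        pr μ (fun ω' => (trunc (F ω') (i.1 + 1), trunc (Y ω') i.1))
          (trunc (F ω) (i.1 + 1), trunc (Y ω) i.1) := by
      unfold condpr
      congr 1
      · refine pr_congr μ (fun ω' => ?_)
        simp only [Prod.mk.injEq, pfx_eq_iff_trunc,
          trunc_succ_eq_iff (Y ω') (Y ω) i.isLt, Fin.eta]
        tauto
      · refine pr_congr μ (fun ω' => ?_)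
        simp only [Prod.mk.injEq, pfx_eq_iff_trunc]
    rw [e1, e2]
    field_simp
  have := tele (n := n)
    (fun k => pr μ (fun ω' => (trunc (F ω') k, trunc (Y ω') k))
      (trunc (F ω) k, trunc (Y ω) k)) _ h0 hstep
  rw [← this]
  refine pr_congr μ (fun ω' => ?_)
  simp only [Prod.mk.injEq, trunc_n_eq_iff]

/-- Chain rule for a single sequence. -/
lemma chain_single (μ : Ω → ℝ) (hμ0 : ∀ ω, 0 ≤ μ ω) (hμ1 : ∑ ω, μ ω = 1)
    {φ : Type*} [Fintype φ] [DecidableEq φ]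
    {n : ℕ} (F : Ω → Fin n → φ) (ω : Ω) (hω : 0 < μ ω) :
    pr μ F (F ω) =
      ∏ i : Fin n, condpr μ (fun ω' => F ω' i)
        (fun ω' => pfx (F ω') i.1 i.isLt.le) (F ω i) (pfx (F ω) i.1 i.isLt.le) := by
  have h0 : pr μ (fun ω' => trunc (F ω') 0) (trunc (F ω) 0) = 1 := by
    unfold pr
    rw [Finset.filter_true_of_mem (fun ω' _ => trunc_zero_eq _ _)]
    exact hμ1
  have hstep : ∀ i : Fin n,
      pr μ (fun ω' => trunc (F ω') (i.1 + 1)) (trunc (F ω) (i.1 + 1)) =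
      pr μ (fun ω' => trunc (F ω') i.1) (trunc (F ω) i.1) *
        condpr μ (fun ω' => F ω' i)
          (fun ω' => pfx (F ω') i.1 i.isLt.le) (F ω i) (pfx (F ω) i.1 i.isLt.le) := by
    intro i
    have hQ : 0 < pr μ (fun ω' => trunc (F ω') i.1) (trunc (F ω) i.1) :=
      pr_pos μ hμ0 (fun ω' => trunc (F ω') i.1) hω
    have e1 : condpr μ (fun ω' => F ω' i)
        (fun ω' => pfx (F ω') i.1 i.isLt.le) (F ω i) (pfx (F ω) i.1 i.isLt.le) =
        pr μ (fun ω' => trunc (F ω') (i.1 + 1)) (trunc (F ω) (i.1 + 1)) /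
        pr μ (fun ω' => trunc (F ω') i.1) (trunc (F ω) i.1) := by
      unfold condpr
      congr 1
      · refine pr_congr μ (fun ω' => ?_)
        simp only [Prod.mk.injEq, pfx_eq_iff_trunc,
          trunc_succ_eq_iff (F ω') (F ω) i.isLt, Fin.eta]
      · refine pr_congr μ (fun ω' => ?_)
        simp only [pfx_eq_iff_trunc]
    rw [e1]
    field_simp
  have := tele (n := n)
    (fun k => pr μ (fun ω' => trunc (F ω') k) (trunc (F ω) k)) _ h0 hstep
  rw [← this]
  exact pr_congr μ (fun ω' => (trunc_n_eq_iff _ _).symm)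


/-- with code-functions `Fⁿ` chosen without feedback, inputs
`Xᵢ` determined by `(Fⁱ, Zⁱ⁻¹)`, and the Markov chain `Fⁱ − (Xⁱ, Yⁱ⁻¹) − Yᵢ`,
the mutual information density satisfies, pointwise on the support,
`i(Fⁿ; Yⁿ) = i(Xⁿ → Yⁿ) − i(Xⁿ → Yⁿ ‖ Fⁿ)`. -/
theorem stmt15 {Ω : Type*} [Fintype Ω] (μ : Ω → ℝ)
    (hμ0 : ∀ ω, 0 ≤ μ ω) (hμ1 : ∑ ω, μ ω = 1)
    {α β ζ φ : Type*} [Fintype α] [DecidableEq α] [Fintype β] [DecidableEq β]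
    [Fintype ζ] [DecidableEq ζ] [Fintype φ] [DecidableEq φ]
    {n : ℕ} (F : Ω → Fin n → φ) (X : Ω → Fin n → α) (Y : Ω → Fin n → β)
    (Z : Ω → Fin n → ζ)
    (hX : ∀ i : Fin n, ∃ g : (Fin (i.1 + 1) → φ) × (Fin i.1 → ζ) → α,
      ∀ ω, X ω i = g (pfx (F ω) (i.1 + 1) i.isLt, pfx (Z ω) i.1 i.isLt.le))
    (hnofb : ∀ i : Fin n, ∀ ω, 0 < μ ω →
      condpr μ (fun ω' => F ω' i)
        (fun ω' => (pfx (F ω') i.1 i.isLt.le, pfx (Y ω') i.1 i.isLt.le))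
        (F ω i) (pfx (F ω) i.1 i.isLt.le, pfx (Y ω) i.1 i.isLt.le)
      = condpr μ (fun ω' => F ω' i) (fun ω' => pfx (F ω') i.1 i.isLt.le)
          (F ω i) (pfx (F ω) i.1 i.isLt.le))
    (hMarkov : ∀ i : Fin n, ∀ ω, 0 < μ ω →
      condpr μ (fun ω' => Y ω' i)
        (fun ω' => (pfx (F ω') (i.1 + 1) i.isLt, pfx (X ω') (i.1 + 1) i.isLt,
          pfx (Y ω') i.1 i.isLt.le))
        (Y ω i)
        (pfx (F ω) (i.1 + 1) i.isLt, pfx (X ω) (i.1 + 1) i.isLt,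
          pfx (Y ω) i.1 i.isLt.le)
      = condpr μ (fun ω' => Y ω' i)
          (fun ω' => (pfx (X ω') (i.1 + 1) i.isLt, pfx (Y ω') i.1 i.isLt.le))
          (Y ω i)
          (pfx (X ω) (i.1 + 1) i.isLt, pfx (Y ω) i.1 i.isLt.le)) :
    ∀ ω, 0 < μ ω →
      Real.logb 2 (pr μ (fun ω' => (F ω', Y ω')) (F ω, Y ω)
          / (pr μ F (F ω) * pr μ Y (Y ω)))
      = Real.logb 2
          ((∏ i : Fin n, condpr μ (fun ω' => Y ω' i)
              (fun ω' => (pfx (X ω') (i.1 + 1) i.isLt, pfx (Y ω') i.1 i.isLt.le))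
              (Y ω i)
              (pfx (X ω) (i.1 + 1) i.isLt, pfx (Y ω) i.1 i.isLt.le))
            / pr μ Y (Y ω))
        - Real.logb 2
          ((∏ i : Fin n, condpr μ (fun ω' => Y ω' i)
              (fun ω' => (pfx (X ω') (i.1 + 1) i.isLt, pfx (F ω') (i.1 + 1) i.isLt,
                pfx (Y ω') i.1 i.isLt.le))
              (Y ω i)
              (pfx (X ω) (i.1 + 1) i.isLt, pfx (F ω) (i.1 + 1) i.isLt,
                pfx (Y ω) i.1 i.isLt.le))
            / (∏ i : Fin n, condpr μ (fun ω' => Y ω' i)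
              (fun ω' => (pfx (F ω') (i.1 + 1) i.isLt, pfx (Y ω') i.1 i.isLt.le))
              (Y ω i)
              (pfx (F ω) (i.1 + 1) i.isLt, pfx (Y ω) i.1 i.isLt.le))) := by
  intro ω hω
  have hpY : 0 < pr μ Y (Y ω) := pr_pos μ hμ0 Y hω
  have hA : 0 < ∏ i : Fin n, condpr μ (fun ω' => Y ω' i)
      (fun ω' => (pfx (X ω') (i.1 + 1) i.isLt, pfx (Y ω') i.1 i.isLt.le))
      (Y ω i) (pfx (X ω) (i.1 + 1) i.isLt, pfx (Y ω) i.1 i.isLt.le) :=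
    Finset.prod_pos fun i _ => condpr_pos μ hμ0 (fun ω' => Y ω' i)
      (fun ω' => (pfx (X ω') (i.1 + 1) i.isLt, pfx (Y ω') i.1 i.isLt.le)) hω
  have hB : 0 < ∏ i : Fin n, condpr μ (fun ω' => Y ω' i)
      (fun ω' => (pfx (F ω') (i.1 + 1) i.isLt, pfx (Y ω') i.1 i.isLt.le))
      (Y ω i) (pfx (F ω) (i.1 + 1) i.isLt, pfx (Y ω) i.1 i.isLt.le) :=
    Finset.prod_pos fun i _ => condpr_pos μ hμ0 (fun ω' => Y ω' i)
      (fun ω' => (pfx (F ω') (i.1 + 1) i.isLt, pfx (Y ω') i.1 i.isLt.le)) hω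
  have hC : 0 < ∏ i : Fin n, condpr μ (fun ω' => F ω' i)
      (fun ω' => pfx (F ω') i.1 i.isLt.le) (F ω i) (pfx (F ω) i.1 i.isLt.le) :=
    Finset.prod_pos fun i _ => condpr_pos μ hμ0 (fun ω' => F ω' i)
      (fun ω' => pfx (F ω') i.1 i.isLt.le) hω
  have hM : (∏ i : Fin n, condpr μ (fun ω' => Y ω' i)
      (fun ω' => (pfx (X ω') (i.1 + 1) i.isLt, pfx (F ω') (i.1 + 1) i.isLt,
        pfx (Y ω') i.1 i.isLt.le))
      (Y ω i)
      (pfx (X ω) (i.1 + 1) i.isLt, pfx (F ω) (i.1 + 1) i.isLt,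
        pfx (Y ω) i.1 i.isLt.le)) =
      ∏ i : Fin n, condpr μ (fun ω' => Y ω' i)
        (fun ω' => (pfx (X ω') (i.1 + 1) i.isLt, pfx (Y ω') i.1 i.isLt.le))
        (Y ω i) (pfx (X ω) (i.1 + 1) i.isLt, pfx (Y ω) i.1 i.isLt.le) := by
    refine Finset.prod_congr rfl fun i _ => ?_
    rw [← hMarkov i ω hω]
    refine condpr_congr μ (fun ω'' => Iff.rfl) (fun ω'' => ?_)
    simp only [Prod.mk.injEq]
    tauto
  have hchain := chain_pair μ hμ0 hμ1 F Y ω hω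
  have hsingle := chain_single μ hμ0 hμ1 F ω hω
  have hFprod : (∏ i : Fin n,
      (condpr μ (fun ω' => F ω' i)
          (fun ω' => (pfx (F ω') i.1 i.isLt.le, pfx (Y ω') i.1 i.isLt.le))
          (F ω i) (pfx (F ω) i.1 i.isLt.le, pfx (Y ω) i.1 i.isLt.le) *
        condpr μ (fun ω' => Y ω' i)
          (fun ω' => (pfx (F ω') (i.1 + 1) i.isLt, pfx (Y ω') i.1 i.isLt.le))
          (Y ω i) (pfx (F ω) (i.1 + 1) i.isLt, pfx (Y ω) i.1 i.isLt.le))) =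
      (∏ i : Fin n, condpr μ (fun ω' => F ω' i)
        (fun ω' => pfx (F ω') i.1 i.isLt.le) (F ω i) (pfx (F ω) i.1 i.isLt.le)) *
      ∏ i : Fin n, condpr μ (fun ω' => Y ω' i)
        (fun ω' => (pfx (F ω') (i.1 + 1) i.isLt, pfx (Y ω') i.1 i.isLt.le))
        (Y ω i) (pfx (F ω) (i.1 + 1) i.isLt, pfx (Y ω) i.1 i.isLt.le) := by
    rw [Finset.prod_mul_distrib]
    congr 1
    exact Finset.prod_congr rfl fun i _ => hnofb i ω hω
  rw [hchain, hsingle, hFprod, hM]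
  rw [mul_div_mul_left _ _ hC.ne']
  rw [Real.logb_div hB.ne' hpY.ne', Real.logb_div hA.ne' hpY.ne',
    Real.logb_div hA.ne' hB.ne']
  ring
end NFB
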